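/- arXiv:1407.4853 — 9 statements merged into one kernel-verified Lean document; each statement's English description precedes it below -/
import Mathlib

section
/- Let ξ : (𝔤, ⟨·,·⟩_𝔤) → (𝔥, ⟨·,·⟩_𝔥) be a linear map between finite-dimensional Euclidean Lie algebras, let B be the Levi-Civita product of 𝔥, and define U^ξ = Σ_i B_{ξ(e_i)} ξ(e_i) for an orthonormal basis (e_i) of 𝔤. Then for every u ∈ 𝔥, ⟨U^ξ, u⟩_𝔥 = tr(ξ* ∘ ad_u ∘ ξ), where ξ* is the adjoint of ξ with respect to the inner products. -/
/-- For a linear map ξ between Euclidean Lie algebras, with B the Levi-Civita product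
of the target and U^ξ = Σ_i B_{ξ(e_i)} ξ(e_i), one has ⟨U^ξ, u⟩ = tr(ξ* ∘ ad_u ∘ ξ). -/
theorem stmt_2 {g h : Type*}
    [LieRing g] [LieAlgebra ℝ g] [FiniteDimensional ℝ g]
    [LieRing h] [LieAlgebra ℝ h] [FiniteDimensional ℝ h]
    {ι : Type*} [Fintype ι] [DecidableEq ι]
    (ipg : LinearMap.BilinForm ℝ g)
    (hgsymm : ∀ x y : g, ipg x y = ipg y x)
    (hgpos : ∀ x : g, x ≠ 0 → 0 < ipg x x)
    (iph : LinearMap.BilinForm ℝ h)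
    (hhsymm : ∀ x y : h, iph x y = iph y x)
    (hhpos : ∀ x : h, x ≠ 0 → 0 < iph x x)
    (ξ : g →ₗ[ℝ] h) (ξstar : h →ₗ[ℝ] g)
    (hadj : ∀ (x : g) (y : h), iph (ξ x) y = ipg x (ξstar y))
    (B : h →ₗ[ℝ] h →ₗ[ℝ] h)
    (hB : ∀ u v w : h, 2 * iph (B u v) w = iph ⁅u, v⁆ w + iph ⁅w, u⁆ v + iph ⁅w, v⁆ u)
    (b : Module.Basis ι ℝ g)
    (hb : ∀ i j, ipg (b i) (b j) = if i = j then 1 else 0) :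
    ∀ u : h, iph (∑ i, B (ξ (b i)) (ξ (b i))) u
      = LinearMap.trace ℝ g (ξstar ∘ₗ LieAlgebra.ad ℝ h u ∘ₗ ξ) := by
  intro u
  have hrep : ∀ (j : ι) (x : g), ipg (b j) x = b.repr x j := by
    intro j x
    conv_lhs => rw [← b.sum_repr x]
    rw [map_sum]
    simp only [map_smul, smul_eq_mul, hb]
    simp
  have hBvv : ∀ v : h, iph (B v v) u = iph ⁅u, v⁆ v := by
    intro v
    have := hB v v u
    rw [lie_self] at this
    simp only [map_zero, LinearMap.zero_apply, zero_add] at this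
    linarith
  rw [LinearMap.trace_eq_matrix_trace ℝ b, Matrix.trace]
  simp only [Matrix.diag_apply, LinearMap.toMatrix_apply]
  rw [map_sum]
  simp only [LinearMap.sum_apply]
  apply Finset.sum_congr rfl
  intro i _
  rw [hBvv, hhsymm, hadj, hrep]
  rfl
end

section
/- Let ξ : (𝔤, ⟨·,·⟩_𝔤) → (𝔥, ⟨·,·⟩_𝔥) be a linear map between finite-dimensional Euclidean Lie algebras and U^ξ = Σ_i B_{ξ(e_i)} ξ(e_i) where B is the Levi-Civita product of 𝔥 and (e_i) an orthonormal basis of 𝔤. Then U^ξ is orthogonal to Kill(𝔥) := {u ∈ 𝔥 : ad_u + ad_u* = 0}. -/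
/-- For a linear map ξ between Euclidean Lie algebras, U^ξ = Σ_i B_{ξ(e_i)} ξ(e_i)
is orthogonal to Kill(𝔥) = {u : ad_u skew-symmetric}. -/
theorem stmt_3 {g h : Type*}
    [LieRing g] [LieAlgebra ℝ g] [FiniteDimensional ℝ g]
    [LieRing h] [LieAlgebra ℝ h] [FiniteDimensional ℝ h]
    {ι : Type*} [Fintype ι] [DecidableEq ι]
    (ipg : LinearMap.BilinForm ℝ g)
    (hgsymm : ∀ x y : g, ipg x y = ipg y x)
    (hgpos : ∀ x : g, x ≠ 0 → 0 < ipg x x)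
    (iph : LinearMap.BilinForm ℝ h)
    (hhsymm : ∀ x y : h, iph x y = iph y x)
    (hhpos : ∀ x : h, x ≠ 0 → 0 < iph x x)
    (ξ : g →ₗ[ℝ] h)
    (B : h →ₗ[ℝ] h →ₗ[ℝ] h)
    (hB : ∀ u v w : h, 2 * iph (B u v) w = iph ⁅u, v⁆ w + iph ⁅w, u⁆ v + iph ⁅w, v⁆ u)
    (b : Module.Basis ι ℝ g)
    (hb : ∀ i j, ipg (b i) (b j) = if i = j then 1 else 0) :
    ∀ u : h, (∀ x y : h, iph ⁅u, x⁆ y + iph x ⁅u, y⁆ = 0) →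
      iph (∑ i, B (ξ (b i)) (ξ (b i))) u = 0 := by
  intro u hu
  have key : ∀ v : h, iph (B v v) u = 0 := by
    intro v
    have h1 := hB v v u
    have h2 := hu v v
    have h3 : iph v ⁅u, v⁆ = iph ⁅u, v⁆ v := hhsymm _ _
    have h4 : iph ⁅u, v⁆ v = 0 := by linarith
    have h5 : (⁅v, v⁆ : h) = 0 := lie_self v
    rw [h5, map_zero, LinearMap.zero_apply] at h1
    linarith
  rw [map_sum, LinearMap.sum_apply]
  exact Finset.sum_eq_zero fun i _ => key _
end

section
/- Let ξ : 𝔤 → 𝔥 be a Lie algebra homomorphism between finite-dimensional Euclidean Lie algebras. Suppose that for every u ∈ 𝔤, ad_u is skew-symmetric with respect to ⟨·,·⟩_𝔤 (i.e., the metric on 𝔤 is bi-invariant) and ξ is surjective. Then the tension vector τ(ξ) = U^ξ − ξ(U^𝔤) vanishes, where U^ξ = Σ_i B_{ξ(e_i)} ξ(e_i) for an orthonormal basis (e_i) of 𝔤, B the Levi-Civita product of 𝔥, and U^𝔤 ∈ 𝔤 is determined by ⟨U^𝔤, v⟩ = tr(ad_v). -/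
/-- If the metric on 𝔤 is bi-invariant (all ad_u skew-symmetric) and the Lie algebra
homomorphism ξ is surjective, then the tension τ(ξ) = U^ξ − ξ(U^𝔤) vanishes. -/
theorem stmt_4 {g h : Type*}
    [LieRing g] [LieAlgebra ℝ g] [FiniteDimensional ℝ g]
    [LieRing h] [LieAlgebra ℝ h] [FiniteDimensional ℝ h]
    {ι : Type*} [Fintype ι] [DecidableEq ι]
    (ipg : LinearMap.BilinForm ℝ g)
    (hgsymm : ∀ x y : g, ipg x y = ipg y x)
    (hgpos : ∀ x : g, x ≠ 0 → 0 < ipg x x)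
    (iph : LinearMap.BilinForm ℝ h)
    (hhsymm : ∀ x y : h, iph x y = iph y x)
    (hhpos : ∀ x : h, x ≠ 0 → 0 < iph x x)
    (ξ : g →ₗ⁅ℝ⁆ h)
    (hbi : ∀ u x y : g, ipg ⁅u, x⁆ y + ipg x ⁅u, y⁆ = 0)
    (hsurj : Function.Surjective ξ)
    (B : h →ₗ[ℝ] h →ₗ[ℝ] h)
    (hB : ∀ u v w : h, 2 * iph (B u v) w = iph ⁅u, v⁆ w + iph ⁅w, u⁆ v + iph ⁅w, v⁆ u)
    (b : Module.Basis ι ℝ g)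
    (hb : ∀ i j, ipg (b i) (b j) = if i = j then 1 else 0)
    (Ug : g) (hUg : ∀ v : g, ipg Ug v = LinearMap.trace ℝ g (LieAlgebra.ad ℝ g v)) :
    (∑ i, B (ξ (b i)) (ξ (b i))) - ξ Ug = 0 := by
  -- coordinates via the orthonormal basis
  have hrepr : ∀ (v : g) (i : ι), b.repr v i = ipg v (b i) := by
    intro v i
    conv_rhs => rw [← b.sum_repr v]
    simp [-Module.Basis.sum_repr, map_sum, LinearMap.sum_apply, map_smul, LinearMap.smul_apply, hb,
      mul_ite, mul_one, mul_zero]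
  -- diagonal terms of ad vanish
  have hdiag : ∀ (v : g) (i : ι), ipg ⁅v, b i⁆ (b i) = 0 := by
    intro v i
    have := hbi v (b i) (b i)
    have hs := hgsymm (b i) ⁅v, b i⁆
    linarith
  -- Ug = 0
  have hUg0 : Ug = 0 := by
    have htr : ∀ v : g, LinearMap.trace ℝ g (LieAlgebra.ad ℝ g v) = 0 := by
      intro v
      rw [LinearMap.trace_eq_matrix_trace ℝ b, Matrix.trace]
      apply Finset.sum_eq_zero
      intro i _
      rw [Matrix.diag_apply, LinearMap.toMatrix_apply, LieAlgebra.ad_apply, hrepr,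
        hdiag]
    by_contra h0
    have := hgpos Ug h0
    rw [hUg Ug, htr] at this
    exact lt_irrefl 0 this
  rw [hUg0, map_zero, sub_zero]
  -- nondegeneracy of iph
  by_contra h0
  have hz := hhpos _ h0
  set z := ∑ i, B (ξ (b i)) (ξ (b i)) with hzdef
  -- iph z w = 0 for all w
  have key : ∀ w : h, iph z w = 0 := by
    intro w
    obtain ⟨x, rfl⟩ := hsurj w
    have hterm : ∀ i : ι, iph (B (ξ (b i)) (ξ (b i))) (ξ x) = iph ⁅ξ x, ξ (b i)⁆ (ξ (b i)) := by
      intro i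
      have := hB (ξ (b i)) (ξ (b i)) (ξ x)
      simp only [lie_self, map_zero, LinearMap.zero_apply] at this
      linarith
    have hexp : ∀ i : ι, iph ⁅ξ x, ξ (b i)⁆ (ξ (b i)) =
        ∑ j, ipg ⁅x, b i⁆ (b j) * iph (ξ (b j)) (ξ (b i)) := by
      intro i
      rw [← LieHom.map_lie, show ξ ⁅x, b i⁆ = ξ.toLinearMap ⁅x, b i⁆ from rfl]
      conv_lhs => rw [← b.sum_repr ⁅x, b i⁆]
      simp only [map_sum, map_smul, LinearMap.sum_apply, LinearMap.smul_apply,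
        smul_eq_mul, LieHom.coe_toLinearMap]
      exact Finset.sum_congr rfl fun j _ => by rw [hrepr]
    rw [hzdef, map_sum, LinearMap.sum_apply]
    calc (∑ i, iph (B (ξ (b i)) (ξ (b i))) (ξ x))
        = ∑ i, ∑ j, ipg ⁅x, b i⁆ (b j) * iph (ξ (b j)) (ξ (b i)) := by
          exact Finset.sum_congr rfl fun i _ => by rw [hterm, hexp]
      _ = 0 := by
          have hA : ∀ i j : ι, ipg ⁅x, b i⁆ (b j) = - ipg ⁅x, b j⁆ (b i) := by
            intro i j
            have := hbi x (b i) (b j)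
            have hs := hgsymm (b i) ⁅x, b j⁆
            linarith
          have hswap : (∑ i, ∑ j, ipg ⁅x, b i⁆ (b j) * iph (ξ (b j)) (ξ (b i)))
              = - ∑ i, ∑ j, ipg ⁅x, b i⁆ (b j) * iph (ξ (b j)) (ξ (b i)) := by
            conv_lhs => rw [Finset.sum_comm]
            rw [← Finset.sum_neg_distrib]
            refine Finset.sum_congr rfl fun i _ => ?_
            rw [← Finset.sum_neg_distrib]
            refine Finset.sum_congr rfl fun j _ => ?_
            rw [hA j i, hhsymm (ξ (b i)) (ξ (b j))]
            ring
          linarith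
  have := key z
  rw [this] at hz
  exact lt_irrefl 0 hz
end

section
/- Let ξ : 𝔤 → 𝔥 be a Lie algebra homomorphism between finite-dimensional Euclidean Lie algebras such that the metric on 𝔥 is bi-invariant (ad_u is skew-symmetric for all u ∈ 𝔥) and 𝔤 is unimodular (tr(ad_v) = 0 for all v ∈ 𝔤). Then τ(ξ) = U^ξ − ξ(U^𝔤) = 0, i.e., ξ is harmonic. -/
/-- If the metric on 𝔥 is bi-invariant and 𝔤 is unimodular, then any Lie algebra
homomorphism ξ : 𝔤 → 𝔥 has vanishing tension τ(ξ) = U^ξ − ξ(U^𝔤) = 0 (ξ is harmonic). -/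
theorem stmt_5 {g h : Type*}
    [LieRing g] [LieAlgebra ℝ g] [FiniteDimensional ℝ g]
    [LieRing h] [LieAlgebra ℝ h] [FiniteDimensional ℝ h]
    {ι : Type*} [Fintype ι] [DecidableEq ι]
    (ipg : LinearMap.BilinForm ℝ g)
    (hgsymm : ∀ x y : g, ipg x y = ipg y x)
    (hgpos : ∀ x : g, x ≠ 0 → 0 < ipg x x)
    (iph : LinearMap.BilinForm ℝ h)
    (hhsymm : ∀ x y : h, iph x y = iph y x)
    (hhpos : ∀ x : h, x ≠ 0 → 0 < iph x x)
    (ξ : g →ₗ⁅ℝ⁆ h)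
    (hbih : ∀ u x y : h, iph ⁅u, x⁆ y + iph x ⁅u, y⁆ = 0)
    (hgun : ∀ v : g, LinearMap.trace ℝ g (LieAlgebra.ad ℝ g v) = 0)
    (B : h →ₗ[ℝ] h →ₗ[ℝ] h)
    (hB : ∀ u v w : h, 2 * iph (B u v) w = iph ⁅u, v⁆ w + iph ⁅w, u⁆ v + iph ⁅w, v⁆ u)
    (b : Module.Basis ι ℝ g)
    (hb : ∀ i j, ipg (b i) (b j) = if i = j then 1 else 0)
    (Ug : g) (hUg : ∀ v : g, ipg Ug v = LinearMap.trace ℝ g (LieAlgebra.ad ℝ g v)) :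
    (∑ i, B (ξ (b i)) (ξ (b i))) - ξ Ug = 0 := by
  have hUg0 : Ug = 0 := by
    by_contra hne
    have := hgpos Ug hne
    rw [hUg Ug, hgun Ug] at this
    exact lt_irrefl 0 this
  have hBuu : ∀ u : h, B u u = 0 := by
    intro u
    by_contra hne
    have hpos := hhpos (B u u) hne
    have key : iph (B u u) (B u u) = 0 := by
      have h1 := hB u u (B u u)
      have h2 := hbih (B u u) u u
      have h3 : iph u ⁅B u u, u⁆ = iph ⁅B u u, u⁆ u := hhsymm _ _
      have h4 : iph ⁅u, u⁆ (B u u) = 0 := by simp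
      nlinarith [h1, h2, h3, h4]
    rw [key] at hpos
    exact lt_irrefl 0 hpos
  simp [hUg0, hBuu]
end

section
/- Let (𝔤, ⟨·,·⟩) be a finite-dimensional Euclidean Lie algebra and let U^𝔤 ∈ 𝔤 be defined by ⟨U^𝔤, v⟩ = tr(ad_v) for all v. If for all u, v ∈ 𝔤 one has tr((ad_v + ad_v*) ∘ ad_u) = tr(ad_{ad_v* u}), then ad_{U^𝔤} + ad_{U^𝔤}* = 0 and U^𝔤 = 0; in particular 𝔤 is unimodular. -/
/-- If tr((ad_v + ad_v*) ∘ ad_u) = tr(ad_{ad_v* u}) for all u, v, then ad_{U^𝔤} is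
skew-symmetric and U^𝔤 = 0; in particular 𝔤 is unimodular. -/
theorem stmt_8 {g : Type*} [LieRing g] [LieAlgebra ℝ g] [FiniteDimensional ℝ g]
    (ip : LinearMap.BilinForm ℝ g)
    (hsymm : ∀ x y : g, ip x y = ip y x)
    (hpos : ∀ x : g, x ≠ 0 → 0 < ip x x)
    (adstar : g → g →ₗ[ℝ] g)
    (hadstar : ∀ v x y : g, ip ⁅v, x⁆ y = ip x (adstar v y))
    (U : g) (hU : ∀ v : g, ip U v = LinearMap.trace ℝ g (LieAlgebra.ad ℝ g v))
    (hyp : ∀ u v : g,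
      LinearMap.trace ℝ g ((LieAlgebra.ad ℝ g v + adstar v) ∘ₗ LieAlgebra.ad ℝ g u)
        = LinearMap.trace ℝ g (LieAlgebra.ad ℝ g (adstar v u))) :
    LieAlgebra.ad ℝ g U + adstar U = 0 ∧ U = 0 ∧
      ∀ v : g, LinearMap.trace ℝ g (LieAlgebra.ad ℝ g v) = 0 := by
  obtain ⟨b, hb⟩ := LinearMap.BilinForm.exists_orthogonal_basis
    (B := ip) (LinearMap.isSymm_def.mpr fun x y => hsymm x y)
  have ipnn : ∀ x : g, 0 ≤ ip x x := by
    intro x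
    rcases eq_or_ne x 0 with rfl | h
    · simp
    · exact (hpos x h).le
  have ipzero : ∀ x : g, ip x x = 0 → x = 0 := by
    intro x hx
    by_contra h
    exact absurd hx (hpos x h).ne'
  have hd : ∀ i, 0 < ip (b i) (b i) := fun i => hpos _ (b.ne_zero i)
  -- coordinate formula
  have repr_eq : ∀ (x : g) i, b.repr x i = ip x (b i) / ip (b i) (b i) := by
    intro x i
    have hx : ip x (b i) = b.repr x i * ip (b i) (b i) := by
      conv_lhs => rw [← b.sum_repr x]
      rw [map_sum, LinearMap.sum_apply]
      rw [Finset.sum_eq_single i]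
      · simp
      · intro j _ hj
        have hz : ip (b j) (b i) = 0 := hb hj
        rw [map_smul, LinearMap.smul_apply, hz, smul_zero]
      · intro h
        exact absurd (Finset.mem_univ i) h
    rw [hx, mul_div_assoc, div_self (hd i).ne', mul_one]
  have tr_eq : ∀ f : g →ₗ[ℝ] g,
      LinearMap.trace ℝ g f = ∑ i, ip (f (b i)) (b i) / ip (b i) (b i) := by
    intro f
    rw [LinearMap.trace_eq_matrix_trace ℝ b, Matrix.trace]
    simp [Matrix.diag, LinearMap.toMatrix_apply, repr_eq]
  have tr_adj : ∀ (A B : g →ₗ[ℝ] g), (∀ x y : g, ip (A x) y = ip x (B y)) →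
      LinearMap.trace ℝ g A = LinearMap.trace ℝ g B := by
    intro A B h
    rw [tr_eq, tr_eq]
    refine Finset.sum_congr rfl fun i _ => ?_
    rw [h, hsymm]
  set S := LieAlgebra.ad ℝ g U + adstar U with hSdef
  have hSsym : ∀ x y : g, ip (S x) y = ip x (S y) := by
    intro x y
    simp only [hSdef, LinearMap.add_apply, LieAlgebra.ad_apply, map_add]
    rw [hadstar U x y, hsymm (adstar U x) y, ← hadstar U y x, hsymm ⁅U, y⁆ x]
    ring
  have h1 : ∀ u : g, LinearMap.trace ℝ g (S ∘ₗ LieAlgebra.ad ℝ g u) = 0 := by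
    intro u
    rw [hSdef, hyp u U, ← hU, ← hadstar U U u, lie_self]
    simp
  have h2 : LinearMap.trace ℝ g (S ∘ₗ S) = 0 := by
    have hsplit : S ∘ₗ S = S ∘ₗ LieAlgebra.ad ℝ g U + S ∘ₗ adstar U := by
      rw [hSdef, LinearMap.comp_add]
    have h3 : LinearMap.trace ℝ g (S ∘ₗ adstar U)
        = LinearMap.trace ℝ g (LieAlgebra.ad ℝ g U ∘ₗ S) := by
      refine tr_adj _ _ fun x y => ?_
      simp only [LinearMap.comp_apply, LieAlgebra.ad_apply]
      rw [hSsym (adstar U x) y, hsymm (adstar U x) (S y), ← hadstar U (S y) x,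
        hsymm ⁅U, S y⁆ x]
    have h4 : LinearMap.trace ℝ g (LieAlgebra.ad ℝ g U ∘ₗ S)
        = LinearMap.trace ℝ g (S ∘ₗ LieAlgebra.ad ℝ g U) :=
      LinearMap.trace_mul_comm ℝ _ _
    rw [hsplit, map_add, h3, h4, h1 U]
    ring
  have hS0 : S = 0 := by
    have hsum : ∑ i, ip (S (b i)) (S (b i)) / ip (b i) (b i) = 0 := by
      have h2' := h2
      rw [tr_eq] at h2'
      simp only [LinearMap.comp_apply] at h2'
      calc ∑ i, ip (S (b i)) (S (b i)) / ip (b i) (b i)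
          = ∑ i, ip (S (S (b i))) (b i) / ip (b i) (b i) := by
            refine Finset.sum_congr rfl fun i _ => ?_
            rw [hSsym, hsymm]
        _ = 0 := h2'
    have heach := (Finset.sum_eq_zero_iff_of_nonneg
      (fun i _ => div_nonneg (ipnn _) (hd i).le)).mp hsum
    apply b.ext; intro i
    have hz0 := heach i (Finset.mem_univ i)
    have hz : ip (S (b i)) (S (b i)) = 0 := by
      rcases div_eq_zero_iff.mp hz0 with h | h
      · exact h
      · exact absurd h (hd i).ne'
    simpa using ipzero _ hz
  have htrU : LinearMap.trace ℝ g (LieAlgebra.ad ℝ g U) = 0 := by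
    have e1 : LinearMap.trace ℝ g (LieAlgebra.ad ℝ g U)
        = LinearMap.trace ℝ g (adstar U) := by
      refine tr_adj _ _ fun x y => ?_
      simpa using hadstar U x y
    have e2 : adstar U = -LieAlgebra.ad ℝ g U := eq_neg_of_add_eq_zero_right hS0
    rw [e2, map_neg] at e1
    linarith
  have hU0 : U = 0 := by
    apply ipzero
    rw [hU U, htrU]
  refine ⟨hS0, hU0, fun v => ?_⟩
  rw [← hU v, hU0]
  simp
end

section
/- Let (𝔤, ⟨·,·⟩) be a finite-dimensional Euclidean Lie algebra, and 𝔤_0 ⊂ 𝔤 a Lie subalgebra of codimension 1. Suppose both 𝔤 and 𝔤_0 are unimodular. Then the mean curvature vector H^{𝔤_0} = Σ_i (A_{e_i}e_i − A⁰_{e_i}e_i) vanishes, where (e_i) is an orthonormal basis of 𝔤_0, A is the Levi-Civita product of 𝔤, and A⁰ is the Levi-Civita product of 𝔤_0 with the restricted inner product. -/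
/-- A codimension-one subalgebra 𝔤₀ of a Euclidean Lie algebra 𝔤, with both 𝔤 and 𝔤₀
unimodular, has vanishing mean curvature vector H = Σ_i (A_{e_i}e_i − A⁰_{e_i}e_i). -/
theorem stmt_9 {g : Type*} [LieRing g] [LieAlgebra ℝ g] [FiniteDimensional ℝ g]
    {ι : Type*} [Fintype ι] [DecidableEq ι]
    (ip : LinearMap.BilinForm ℝ g)
    (hsymm : ∀ x y : g, ip x y = ip y x)
    (hpos : ∀ x : g, x ≠ 0 → 0 < ip x x)
    (g0 : LieSubalgebra ℝ g)
    (hcodim : Module.finrank ℝ g = Module.finrank ℝ g0 + 1)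
    (hgun : ∀ v : g, LinearMap.trace ℝ g (LieAlgebra.ad ℝ g v) = 0)
    (hg0un : ∀ v : g0, LinearMap.trace ℝ g0 (LieAlgebra.ad ℝ g0 v) = 0)
    (A : g →ₗ[ℝ] g →ₗ[ℝ] g)
    (hA : ∀ u v w : g, 2 * ip (A u v) w = ip ⁅u, v⁆ w + ip ⁅w, u⁆ v + ip ⁅w, v⁆ u)
    (A0 : g0 →ₗ[ℝ] g0 →ₗ[ℝ] g0)
    (hA0 : ∀ u v w : g0, 2 * ip (A0 u v : g) (w : g)
      = ip (⁅u, v⁆ : g0) (w : g) + ip (⁅w, u⁆ : g0) (v : g) + ip (⁅w, v⁆ : g0) (u : g))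
    (b : Module.Basis ι ℝ g0)
    (hb : ∀ i j, ip (b i : g) (b j : g) = if i = j then 1 else 0) :
    ∑ i, (A (b i : g) (b i : g) - ((A0 (b i) (b i) : g0) : g)) = 0 := by
  classical
  set S := ∑ i, (A (b i : g) (b i : g) - ((A0 (b i) (b i) : g0) : g)) with hS
  -- basic consequences of hA, hA0 with u = v
  have hAe : ∀ e w : g, ip (A e e) w = ip ⁅w, e⁆ e := by
    intro e w
    have h := hA e e w
    rw [lie_self] at h
    simp only [map_zero, LinearMap.zero_apply] at h
    linarith
  have hA0e : ∀ e w : g0, ip ((A0 e e : g0) : g) (w : g) = ip ((⁅w, e⁆ : g0) : g) (e : g) := by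
    intro e w
    have h := hA0 e e w
    rw [lie_self] at h
    simp only [ZeroMemClass.coe_zero, map_zero, LinearMap.zero_apply] at h
    linarith
  have hipS : ∀ w : g, ip S w
      = ∑ i, (ip (A (b i : g) (b i : g)) w - ip ((A0 (b i) (b i) : g0) : g) w) := by
    intro w
    rw [hS, map_sum]
    simp [LinearMap.sum_apply, map_sub]
  -- step 1 : S is orthogonal to g0
  have key1 : ∀ x : g0, ip S (x : g) = 0 := by
    intro x
    rw [hipS]
    refine Finset.sum_eq_zero fun i _ => ?_
    rw [hAe, hA0e, LieSubalgebra.coe_bracket]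
    ring
  suffices h : ∀ w : g, ip S w = 0 by
    by_contra hne
    have h1 := hpos S hne
    have h2 := h S
    linarith
  -- step 2 : S is orthogonal to anything orthogonal to g0
  have key2 : ∀ q : g, (∀ i, ip ((b i : g0) : g) q = 0) → ip S q = 0 := by
    intro q hq
    -- anything in g0 is orthogonal to q
    have horth : ∀ y : g0, ip (y : g) q = 0 := by
      intro y
      have hy := b.sum_repr y
      have hy' : (y : g) = ∑ j, b.repr y j • ((b j : g0) : g) := by
        conv_lhs => rw [← hy]
        push_cast
        exact Finset.sum_congr rfl fun j _ => rfl
      rw [hy', map_sum, LinearMap.sum_apply]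
      refine Finset.sum_eq_zero fun j _ => ?_
      simp [hq j]
    by_cases hq0 : q = 0
    · simp [hq0]
    -- normalize q
    have hqq : 0 < ip q q := hpos q hq0
    set s : ℝ := Real.sqrt (ip q q) with hsdef
    have hs2 : s * s = ip q q := Real.mul_self_sqrt hqq.le
    have hspos : 0 < s := Real.sqrt_pos.mpr hqq
    set n : g := s⁻¹ • q with hn
    -- the extended family
    set f : Option ι → g := fun o => o.elim n (fun i => ((b i : g0) : g)) with hf
    have hon : ∀ o o' : Option ι, ip (f o) (f o') = if o = o' then 1 else 0 := by
      rintro (_ | i) (_ | j)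
      · simp only [hf, Option.elim, hn, map_smul, LinearMap.smul_apply, smul_eq_mul, if_pos rfl]
        field_simp
        simp only [if_true, mul_one]
        nlinarith
      · simp only [hf, Option.elim, hn, map_smul, LinearMap.smul_apply, smul_eq_mul]
        rw [hsymm, hq j]
        simp
      · simp only [hf, Option.elim, hn, map_smul, smul_eq_mul]
        rw [hq i]
        simp
      · simp only [hf, Option.elim, hb i j, Option.some.injEq]
    have hli : LinearIndependent ℝ f := by
      rw [Fintype.linearIndependent_iff]
      intro c hc o
      have h0 : ip (∑ o', c o' • f o') (f o) = 0 := by rw [hc]; simp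
      rw [map_sum, LinearMap.sum_apply] at h0
      simp only [map_smul, LinearMap.smul_apply, smul_eq_mul, hon] at h0
      simpa using h0
    have hcard : Fintype.card (Option ι) = Module.finrank ℝ g := by
      rw [Fintype.card_option, hcodim, Module.finrank_eq_card_basis b]
    let F : Module.Basis (Option ι) ℝ g := basisOfLinearIndependentOfCardEqFinrank hli hcard
    have hF : ⇑F = f := coe_basisOfLinearIndependentOfCardEqFinrank hli hcard
    have hrepr : ∀ (v : g) (o : Option ι), F.repr v o = ip v (f o) := by
      intro v o
      conv_rhs => rw [← F.sum_repr v]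
      rw [map_sum, LinearMap.sum_apply]
      simp only [hF, map_smul, LinearMap.smul_apply, smul_eq_mul, hon]
      simp
    have htr := hgun q
    rw [LinearMap.trace_eq_matrix_trace ℝ F, Matrix.trace] at htr
    have hdiag : ∀ o : Option ι,
        (LinearMap.toMatrix F F (LieAlgebra.ad ℝ g q)) o o = ip ⁅q, f o⁆ (f o) := by
      intro o
      rw [LinearMap.toMatrix_apply, hrepr, hF, LieAlgebra.ad_apply]
    have htr' : (ip ⁅q, n⁆ n + ∑ i, ip ⁅q, ((b i : g0) : g)⁆ ((b i : g0) : g)) = 0 := by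
      rw [← htr]
      rw [Fintype.sum_option]
      simp only [Matrix.diag_apply, hdiag]
      simp only [hf, Option.elim]
    have hqn : ip ⁅q, n⁆ n = 0 := by
      rw [hn, lie_smul, lie_self]
      simp
    have hsum : ∑ i, ip ⁅q, ((b i : g0) : g)⁆ ((b i : g0) : g) = 0 := by linarith
    rw [hipS]
    rw [Finset.sum_sub_distrib]
    have h1 : ∑ i, ip (A ((b i : g0) : g) ((b i : g0) : g)) q = 0 := by
      rw [← hsum]
      refine Finset.sum_congr rfl fun i _ => ?_
      rw [hAe]
    have h2 : ∑ i, ip ((A0 (b i) (b i) : g0) : g) q = 0 :=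
      Finset.sum_eq_zero fun i _ => horth _
    rw [h1, h2, sub_zero]
  -- combine: decompose arbitrary w
  intro w
  set x : g0 := ∑ j, ip w ((b j : g0) : g) • b j with hx
  have hxc : (x : g) = ∑ j, ip w ((b j : g0) : g) • ((b j : g0) : g) := by
    rw [hx]; push_cast; exact Finset.sum_congr rfl fun j _ => rfl
  have hq : ∀ i, ip ((b i : g0) : g) (w - (x : g)) = 0 := by
    intro i
    rw [map_sub, hxc, map_sum]
    simp only [map_smul, smul_eq_mul, hb, mul_ite, mul_one, mul_zero,
      Finset.sum_ite_eq, Finset.mem_univ, if_true]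
    rw [hsymm]
    ring
  have hx0 := key1 x
  have h3 : (x : g) + (w - (x : g)) = w := by abel
  rw [← h3, map_add, hx0, key2 (w - (x : g)) hq]
  ring
end

section
/- Let (𝔤, ⟨·,·⟩) be a finite-dimensional Euclidean Lie algebra and J : 𝔤 → 𝔤 a positive-definite self-adjoint endomorphism. Define the modified inner product ⟨u,v⟩' = ⟨Ju,v⟩. Then the identity map Id : (𝔤, ⟨·,·⟩) → (𝔤, ⟨·,·⟩') has vanishing tension (is harmonic) if and only if for every u ∈ 𝔤, tr(J ∘ ad_u) = tr(ad_{Ju}). -/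
/-- The identity map Id : (𝔤,⟨·,·⟩) → (𝔤,⟨J·,·⟩) has vanishing tension iff
tr(J ∘ ad_u) = tr(ad_{Ju}) for all u. -/
theorem stmt_12 {g : Type*} [LieRing g] [LieAlgebra ℝ g] [FiniteDimensional ℝ g]
    {ι : Type*} [Fintype ι] [DecidableEq ι]
    (ip : LinearMap.BilinForm ℝ g)
    (hsymm : ∀ x y : g, ip x y = ip y x)
    (hpos : ∀ x : g, x ≠ 0 → 0 < ip x x)
    (J : g →ₗ[ℝ] g)
    (hJsymm : ∀ x y : g, ip (J x) y = ip x (J y))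
    (hJpos : ∀ x : g, x ≠ 0 → 0 < ip (J x) x)
    (A : g →ₗ[ℝ] g →ₗ[ℝ] g)
    (hA : ∀ u v w : g, 2 * ip (A u v) w = ip ⁅u, v⁆ w + ip ⁅w, u⁆ v + ip ⁅w, v⁆ u)
    (B : g →ₗ[ℝ] g →ₗ[ℝ] g)
    (hB : ∀ u v w : g, 2 * ip (J (B u v)) w
      = ip (J ⁅u, v⁆) w + ip (J ⁅w, u⁆) v + ip (J ⁅w, v⁆) u)
    (b : Module.Basis ι ℝ g)
    (hb : ∀ i j, ip (b i) (b j) = if i = j then 1 else 0)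
    (τ : g)
    (hτ : ∀ u : g, ip (J τ) u
      = (∑ i, ip (J (B (b i) (b i))) u) - ∑ i, ip (J (A (b i) (b i))) u) :
    τ = 0 ↔ ∀ u : g,
      LinearMap.trace ℝ g (J ∘ₗ LieAlgebra.ad ℝ g u)
        = LinearMap.trace ℝ g (LieAlgebra.ad ℝ g (J u)) := by
  have hrepr : ∀ (x : g) (i : ι), b.repr x i = ip x (b i) := by
    intro x i
    conv_rhs => rw [← b.sum_repr x]
    rw [map_sum, LinearMap.sum_apply]
    simp only [map_smul, LinearMap.smul_apply, smul_eq_mul, hb, mul_ite, mul_one, mul_zero]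
    simp
  have htr : ∀ (M : g →ₗ[ℝ] g), LinearMap.trace ℝ g M = ∑ i, ip (M (b i)) (b i) := by
    intro M
    rw [LinearMap.trace_eq_matrix_trace ℝ b, Matrix.trace]
    refine Finset.sum_congr rfl fun i _ => ?_
    rw [Matrix.diag_apply, LinearMap.toMatrix_apply, hrepr]
  have key : ∀ u : g, ip (J τ) u
      = LinearMap.trace ℝ g (J ∘ₗ LieAlgebra.ad ℝ g u)
        - LinearMap.trace ℝ g (LieAlgebra.ad ℝ g (J u)) := by
    intro u
    have hBsum : ∀ i, ip (J (B (b i) (b i))) u = ip (J ⁅u, b i⁆) (b i) := by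
      intro i
      have h1 := hB (b i) (b i) u
      simp only [lie_self, map_zero, LinearMap.map_zero, LinearMap.zero_apply] at h1
      linarith
    have hAsum : ∀ i, ip (J (A (b i) (b i))) u = ip ⁅J u, b i⁆ (b i) := by
      intro i
      have h1 := hA (b i) (b i) (J u)
      simp only [lie_self, map_zero, LinearMap.map_zero, LinearMap.zero_apply] at h1
      have h2 : ip (J (A (b i) (b i))) u = ip (A (b i) (b i)) (J u) := hJsymm _ _
      linarith
    rw [hτ u, htr, htr]
    congr 1
    · exact Finset.sum_congr rfl fun i _ => by rw [hBsum]; rfl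
    · exact Finset.sum_congr rfl fun i _ => by rw [hAsum]; rfl
  constructor
  · intro h u
    have hk := key u
    rw [h] at hk
    simp only [map_zero, LinearMap.zero_apply] at hk
    linarith
  · intro h
    by_contra hτ0
    have h1 : ip (J τ) τ = 0 := by rw [key τ, h τ]; ring
    exact absurd h1 (ne_of_gt (hJpos τ hτ0))
end

section
/- Let ξ : 𝔤 → 𝔥 be a surjective Lie algebra homomorphism between finite-dimensional Euclidean Lie algebras such that the restriction of ξ to (ker ξ)^⊥ is a linear isometry onto 𝔥 (ξ is a Riemannian submersion at the Lie algebra level). If both 𝔤 and 𝔥 are unimodular, then τ(ξ) = U^ξ − ξ(U^𝔤) = 0. -/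
/-- A Riemannian submersion (at the Lie algebra level) ξ : 𝔤 → 𝔥 between unimodular
Euclidean Lie algebras has vanishing tension τ(ξ) = U^ξ − ξ(U^𝔤) = 0. -/
theorem stmt_17 {g h : Type*}
    [LieRing g] [LieAlgebra ℝ g] [FiniteDimensional ℝ g]
    [LieRing h] [LieAlgebra ℝ h] [FiniteDimensional ℝ h]
    {ι : Type*} [Fintype ι] [DecidableEq ι]
    (ipg : LinearMap.BilinForm ℝ g)
    (hgsymm : ∀ x y : g, ipg x y = ipg y x)
    (hgpos : ∀ x : g, x ≠ 0 → 0 < ipg x x)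
    (iph : LinearMap.BilinForm ℝ h)
    (hhsymm : ∀ x y : h, iph x y = iph y x)
    (hhpos : ∀ x : h, x ≠ 0 → 0 < iph x x)
    (ξ : g →ₗ⁅ℝ⁆ h)
    (hsurj : Function.Surjective ξ)
    (hiso : ∀ x y : g, (∀ z : g, ξ z = 0 → ipg x z = 0) →
      (∀ z : g, ξ z = 0 → ipg y z = 0) → iph (ξ x) (ξ y) = ipg x y)
    (hgun : ∀ v : g, LinearMap.trace ℝ g (LieAlgebra.ad ℝ g v) = 0)
    (hhun : ∀ v : h, LinearMap.trace ℝ h (LieAlgebra.ad ℝ h v) = 0)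
    (B : h →ₗ[ℝ] h →ₗ[ℝ] h)
    (hB : ∀ u v w : h, 2 * iph (B u v) w = iph ⁅u, v⁆ w + iph ⁅w, u⁆ v + iph ⁅w, v⁆ u)
    (b : Module.Basis ι ℝ g)
    (hb : ∀ i j, ipg (b i) (b j) = if i = j then 1 else 0)
    (Ug : g) (hUg : ∀ v : g, ipg Ug v = LinearMap.trace ℝ g (LieAlgebra.ad ℝ g v)) :
    (∑ i, B (ξ (b i)) (ξ (b i))) - ξ Ug = 0 := by
  classical
  -- Step 1: Ug = 0 by unimodularity of g
  have hUg0 : Ug = 0 := by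
    by_contra hne
    have hpos := hgpos Ug hne
    rw [hUg Ug, hgun Ug] at hpos
    exact lt_irrefl 0 hpos
  -- the bilinear form ipg is reflexive
  have hrefl : ipg.IsRefl := fun x y hxy => by rw [hgsymm]; exact hxy
  set K : Submodule ℝ g := LinearMap.ker (ξ : g →ₗ[ℝ] h) with hKdef
  set P : Submodule ℝ g := ipg.orthogonal K with hPdef
  have memK : ∀ z : g, z ∈ K ↔ ξ z = 0 := fun z => LinearMap.mem_ker
  have memP : ∀ z : g, z ∈ P ↔ ∀ n : g, ξ n = 0 → ipg n z = 0 := by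
    intro z
    constructor
    · intro hz n hn
      exact hz n ((memK n).mpr hn)
    · intro hz n hn
      exact hz n ((memK n).mp hn)
  -- restriction of ipg to K is nondegenerate (positive definite)
  have hnd : (ipg.restrict K).Nondegenerate := by
    constructor <;>
    · rintro ⟨x, hx⟩ hxall
      by_contra hne0
      have hx0 : x ≠ 0 := fun h0 => hne0 (by simp [h0])
      have hzz := hxall ⟨x, hx⟩
      simp only [LinearMap.BilinForm.restrict_apply] at hzz
      exact absurd hzz (ne_of_gt (hgpos x hx0))
  have hcompl : IsCompl K P :=
    LinearMap.BilinForm.isCompl_orthogonal_of_restrict_nondegenerate hrefl hnd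
  -- ξ restricted to P is a linear equivalence onto h
  set f : P →ₗ[ℝ] h := (ξ : g →ₗ[ℝ] h).comp P.subtype with hfdef
  have hfinj : Function.Injective f := by
    rw [← LinearMap.ker_eq_bot]
    rw [Submodule.eq_bot_iff]
    rintro ⟨x, hxP⟩ hx
    have hxK : x ∈ K := (memK x).mpr hx
    have : x ∈ K ⊓ P := ⟨hxK, hxP⟩
    rw [hcompl.inf_eq_bot] at this
    exact Subtype.ext (by simpa using this)
  have hfsurj : Function.Surjective f := by
    intro y
    obtain ⟨x, hx⟩ := hsurj y
    have hxmem : x ∈ K ⊔ P := by rw [hcompl.sup_eq_top]; trivial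
    obtain ⟨k, hk, p, hp, hkp⟩ := Submodule.mem_sup.mp hxmem
    refine ⟨⟨p, hp⟩, ?_⟩
    have hξk : ξ k = 0 := (memK k).mp hk
    have : ξ p = ξ x := by
      rw [← hkp]; simp [map_add, hξk]
    simp [hfdef, this, hx]
  set e : P ≃ₗ[ℝ] h := LinearEquiv.ofBijective f ⟨hfinj, hfsurj⟩ with hedef
  set σ : h →ₗ[ℝ] g := P.subtype.comp (e.symm : h →ₗ[ℝ] P) with hσdef
  have hσP : ∀ y : h, σ y ∈ P := fun y => (e.symm y).2
  have hξσ : ∀ y : h, ξ (σ y) = y := by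
    intro y
    have : f (e.symm y) = y := e.apply_symm_apply y
    simpa [hσdef, hfdef] using this
  -- key adjoint property: ipg (σ y) u = iph y (ξ u)
  have key : ∀ (y : h) (u : g), ipg (σ y) u = iph y (ξ u) := by
    intro y u
    have humem : u ∈ K ⊔ P := by rw [hcompl.sup_eq_top]; trivial
    obtain ⟨k, hk, p, hp, hkp⟩ := Submodule.mem_sup.mp humem
    have hξk : ξ k = 0 := (memK k).mp hk
    have h1 : ipg (σ y) k = 0 := by
      rw [hgsymm]
      exact (hσP y) k hk
    have h2 : ipg (σ y) p = iph (ξ (σ y)) (ξ p) := by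
      refine (hiso (σ y) p ?_ ?_).symm
      · intro z hz
        rw [hgsymm]; exact (hσP y) z ((memK z).mpr hz)
      · intro z hz
        rw [hgsymm]; exact hp z ((memK z).mpr hz)
    have hξu : ξ u = ξ p := by rw [← hkp]; simp [map_add, hξk]
    calc ipg (σ y) u = ipg (σ y) k + ipg (σ y) p := by rw [← hkp]; simp [map_add]
      _ = iph (ξ (σ y)) (ξ p) := by rw [h1, h2, zero_add]
      _ = iph y (ξ u) := by rw [hξσ, hξu]
  -- coordinates via the orthonormal basis
  have hcoord : ∀ (v : g) (i : ι), b.repr v i = ipg v (b i) := by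
    intro v i
    conv_rhs => rw [← b.sum_repr v]
    rw [map_sum, LinearMap.sum_apply]
    simp only [map_smul, LinearMap.smul_apply, smul_eq_mul, hb]
    rw [Finset.sum_eq_single i]
    · simp
    · intro j _ hji; simp [hji]
    · intro hi; exact absurd (Finset.mem_univ i) hi
  -- the trace computation
  have htrace : ∀ x : g,
      ∑ i, iph ⁅ξ x, ξ (b i)⁆ (ξ (b i)) = 0 := by
    intro x
    set A : g →ₗ[ℝ] g := σ.comp ((LieAlgebra.ad ℝ h (ξ x)).comp (ξ : g →ₗ[ℝ] h)) with hAdef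
    have htr1 : LinearMap.trace ℝ g A = 0 := by
      have hcc := LinearMap.trace_comp_comm'
        ((LieAlgebra.ad ℝ h (ξ x)).comp (ξ : g →ₗ[ℝ] h)) σ
      have hcomp : ((LieAlgebra.ad ℝ h (ξ x)).comp (ξ : g →ₗ[ℝ] h)).comp σ
          = LieAlgebra.ad ℝ h (ξ x) := by
        apply LinearMap.ext
        intro y
        simp [hξσ y]
      rw [hAdef, hcc, hcomp, hhun]
    have htr2 : LinearMap.trace ℝ g A = ∑ i, iph ⁅ξ x, ξ (b i)⁆ (ξ (b i)) := by
      rw [LinearMap.trace_eq_matrix_trace ℝ b, Matrix.trace]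
      congr 1
      funext i
      rw [Matrix.diag_apply, LinearMap.toMatrix_apply, hcoord]
      have : A (b i) = σ ⁅ξ x, ξ (b i)⁆ := by simp [hAdef, LieAlgebra.ad_apply]
      rw [this, key]
    rw [← htr2, htr1]
  -- the sum is orthogonal to everything, hence zero
  set S : h := ∑ i, B (ξ (b i)) (ξ (b i)) with hSdef
  have hSorth : ∀ w : h, iph S w = 0 := by
    intro w
    obtain ⟨x, rfl⟩ := hsurj w
    have hterm : ∀ i, iph (B (ξ (b i)) (ξ (b i))) (ξ x) = iph ⁅ξ x, ξ (b i)⁆ (ξ (b i)) := by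
      intro i
      have h2B := hB (ξ (b i)) (ξ (b i)) (ξ x)
      rw [lie_self] at h2B
      simp only [map_zero, LinearMap.zero_apply, zero_add] at h2B
      linarith
    calc iph S (ξ x) = ∑ i, iph (B (ξ (b i)) (ξ (b i))) (ξ x) := by
          rw [hSdef, map_sum, LinearMap.sum_apply]
      _ = ∑ i, iph ⁅ξ x, ξ (b i)⁆ (ξ (b i)) := Finset.sum_congr rfl (fun i _ => hterm i)
      _ = 0 := htrace x
  have hS0 : S = 0 := by
    by_contra hne
    have := hhpos S hne
    rw [hSorth S] at this
    exact lt_irrefl 0 this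
  rw [hS0, hUg0, map_zero, sub_zero]
end

section
/- Let 𝔤 = 𝔫 ⊕ 𝔥 be the Euclidean Lie algebra built from Euclidean Lie algebras 𝔫 and 𝔥, a representation by derivations ρ : 𝔥 → Der(𝔫), and ω = 0 (semidirect product), with the orthogonal direct sum inner product, and let π : 𝔤 → 𝔥 be the projection. Then the mean curvature vector H of the inclusion 𝔫 ⊂ 𝔤 satisfies ⟨π(H), h⟩_𝔥 = tr(ρ(h)) for all h ∈ 𝔥; consequently τ(π) = τ(Id_𝔥) − H^ρ where H^ρ ∈ 𝔥 is defined by ⟨H^ρ, h⟩ = tr(ρ(h)). In particular, if tr(ρ(h)) = 0 for all h and the two inner products on 𝔥 coincide, then π is harmonic. -/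
section auxiliary
variable {V : Type*} [AddCommGroup V] [Module ℝ V]

/-- Expansion of a vector in an orthonormal spanning family. -/
lemma stmt18_aux_expand (ip : LinearMap.BilinForm ℝ V)
    (hpos : ∀ x : V, x ≠ 0 → 0 < ip x x)
    {γ : Type*} [Fintype γ] [DecidableEq γ] (F : γ → V)
    (horth : ∀ i j, ip (F i) (F j) = if i = j then 1 else 0)
    (hspan : ∀ x : V, x ∈ Submodule.span ℝ (Set.range F))
    (x : V) : x = ∑ k, ip x (F k) • F k := by
  set d := x - ∑ k, ip x (F k) • F k with hd
  have hdF : ∀ m, ip d (F m) = 0 := by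
    intro m
    have h1 : ip d (F m) = ip x (F m) - ∑ k, ip x (F k) * ip (F k) (F m) := by
      simp [hd, map_sub, map_sum, map_smul, smul_eq_mul]
    rw [h1, Finset.sum_eq_single m]
    · rw [horth]; simp
    · intro k _ hk; rw [horth]; simp [hk]
    · intro hm; simp at hm
  have hker : ∀ z : V, ip d z = 0 := by
    intro z
    have hle : Submodule.span ℝ (Set.range F) ≤ LinearMap.ker (ip d) := by
      rw [Submodule.span_le]
      rintro _ ⟨m, rfl⟩
      simp [LinearMap.mem_ker, hdF m]
    exact hle (hspan z)
  have hd0 : d = 0 := by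
    by_contra hne
    have := hpos d hne
    rw [hker d] at this
    exact lt_irrefl 0 this
  exact (sub_eq_zero.mp hd0)

/-- Diagonal sums of a bilinear map over orthonormal spanning families agree. -/
lemma stmt18_aux_invariant {M : Type*} [AddCommGroup M] [Module ℝ M]
    (ip : LinearMap.BilinForm ℝ V)
    (hsymm : ∀ x y : V, ip x y = ip y x)
    (hpos : ∀ x : V, x ≠ 0 → 0 < ip x x)
    {γ δ : Type*} [Fintype γ] [DecidableEq γ] [Fintype δ] [DecidableEq δ]
    (F : γ → V) (G : δ → V)
    (horthF : ∀ i j, ip (F i) (F j) = if i = j then 1 else 0)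
    (hspanF : ∀ x : V, x ∈ Submodule.span ℝ (Set.range F))
    (horthG : ∀ i j, ip (G i) (G j) = if i = j then 1 else 0)
    (hspanG : ∀ x : V, x ∈ Submodule.span ℝ (Set.range G))
    (β : V →ₗ[ℝ] V →ₗ[ℝ] M) :
    ∑ k, β (F k) (F k) = ∑ k, β (G k) (G k) := by
  have hO : ∀ m n, (∑ k, ip (F k) (G m) * ip (F k) (G n)) = if m = n then 1 else 0 := by
    intro m n
    have hGm := stmt18_aux_expand ip hpos F horthF hspanF (G m)
    calc (∑ k, ip (F k) (G m) * ip (F k) (G n))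
        = ip (∑ k, ip (G m) (F k) • F k) (G n) := by
          simp [map_sum, map_smul, smul_eq_mul]
          exact Finset.sum_congr rfl fun k _ => by rw [hsymm (F k) (G m)]
      _ = ip (G m) (G n) := by rw [← hGm]
      _ = _ := horthG m n
  calc ∑ k, β (F k) (F k)
      = ∑ k, ∑ m, ∑ n, (ip (F k) (G m) * ip (F k) (G n)) • β (G m) (G n) := by
        refine Finset.sum_congr rfl fun k _ => ?_
        conv_lhs => rw [stmt18_aux_expand ip hpos G horthG hspanG (F k)]
        simp [map_sum, map_smul, Finset.smul_sum, smul_smul]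
        rw [Finset.sum_comm]
        exact Finset.sum_congr rfl fun m _ => Finset.sum_congr rfl fun n _ => by
          rw [mul_comm]
    _ = ∑ m, ∑ n, (∑ k, ip (F k) (G m) * ip (F k) (G n)) • β (G m) (G n) := by
        rw [Finset.sum_comm]
        refine Finset.sum_congr rfl fun m _ => ?_
        rw [Finset.sum_comm]
        refine Finset.sum_congr rfl fun n _ => ?_
        rw [Finset.sum_smul]
    _ = ∑ m, β (G m) (G m) := by
        refine Finset.sum_congr rfl fun m _ => ?_
        rw [Finset.sum_eq_single m]
        · rw [hO m m]; simp
        · intro n _ hn; rw [hO m n]; simp [Ne.symm hn]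
        · intro hm; simp at hm

/-- Trace formula for an orthonormal basis. -/
lemma stmt18_aux_trace (ip : LinearMap.BilinForm ℝ V)
    {κ : Type*} [Fintype κ] [DecidableEq κ] (b : Module.Basis κ ℝ V)
    (hb : ∀ i j, ip (b i) (b j) = if i = j then 1 else 0)
    (T : V →ₗ[ℝ] V) :
    LinearMap.trace ℝ V T = ∑ k, ip (T (b k)) (b k) := by
  have hrepr : ∀ (x : V) (k : κ), b.repr x k = ip x (b k) := by
    intro x k
    have hx : ip x (b k) = ∑ m, b.repr x m * ip (b m) (b k) := by
      conv_lhs => rw [← b.sum_repr x]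
      simp [map_sum, LinearMap.sum_apply, map_smul, LinearMap.smul_apply, smul_eq_mul,
        -Module.Basis.sum_repr]
    rw [hx, Finset.sum_eq_single k]
    · rw [hb]; simp
    · intro m _ hm; rw [hb]; simp [hm]
    · intro hk; simp at hk
  rw [LinearMap.trace_eq_matrix_trace ℝ b, Matrix.trace]
  simp only [Matrix.diag]
  refine Finset.sum_congr rfl fun k _ => ?_
  rw [LinearMap.toMatrix_apply, hrepr]
end auxiliary


/-- For the semidirect-product situation (ω = 0): a Riemannian submersion π : 𝔤 → 𝔥
(with 𝔥 carrying a second metric iph2), the mean curvature H of ker π satisfies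
⟨π(H), h'⟩ = tr(ρ(h')), the tension satisfies τ(π) = τ(Id_𝔥) − H^ρ, and if
tr(ρ(h')) = 0 for all h' and the two metrics on 𝔥 coincide then π is harmonic. -/
theorem stmt_18 {g h : Type*}
    [LieRing g] [LieAlgebra ℝ g] [FiniteDimensional ℝ g]
    [LieRing h] [LieAlgebra ℝ h] [FiniteDimensional ℝ h]
    {ι κ κ' : Type*} [Fintype ι] [DecidableEq ι] [Fintype κ] [DecidableEq κ]
    [Fintype κ'] [DecidableEq κ']
    (ipg : LinearMap.BilinForm ℝ g)
    (hgsymm : ∀ x y : g, ipg x y = ipg y x)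
    (hgpos : ∀ x : g, x ≠ 0 → 0 < ipg x x)
    (iph1 iph2 : LinearMap.BilinForm ℝ h)
    (h1symm : ∀ x y : h, iph1 x y = iph1 y x)
    (h1pos : ∀ x : h, x ≠ 0 → 0 < iph1 x x)
    (h2symm : ∀ x y : h, iph2 x y = iph2 y x)
    (h2pos : ∀ x : h, x ≠ 0 → 0 < iph2 x x)
    (π : g →ₗ⁅ℝ⁆ h) (hsurj : Function.Surjective π)
    -- iph1 is the submersion metric: π is a Riemannian submersion (𝔤,ipg) → (𝔥,iph1)
    (hiso : ∀ x y : g, (∀ z : g, π z = 0 → ipg x z = 0) →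
      (∀ z : g, π z = 0 → ipg y z = 0) → iph1 (π x) (π y) = ipg x y)
    -- ω = 0 : the horizontal space (ker π)^⊥ is a subalgebra
    (hω : ∀ x y : g, (∀ z : g, π z = 0 → ipg x z = 0) →
      (∀ z : g, π z = 0 → ipg y z = 0) → ∀ z : g, π z = 0 → ipg ⁅x, y⁆ z = 0)
    (A : g →ₗ[ℝ] g →ₗ[ℝ] g)
    (hA : ∀ u v w : g, 2 * ipg (A u v) w = ipg ⁅u, v⁆ w + ipg ⁅w, u⁆ v + ipg ⁅w, v⁆ u)
    (A1 : h →ₗ[ℝ] h →ₗ[ℝ] h)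
    (hA1 : ∀ u v w : h, 2 * iph1 (A1 u v) w = iph1 ⁅u, v⁆ w + iph1 ⁅w, u⁆ v + iph1 ⁅w, v⁆ u)
    (B : h →ₗ[ℝ] h →ₗ[ℝ] h)
    (hB : ∀ u v w : h, 2 * iph2 (B u v) w = iph2 ⁅u, v⁆ w + iph2 ⁅w, u⁆ v + iph2 ⁅w, v⁆ u)
    -- (f i) is an orthonormal basis of 𝔫 = ker π
    (f : ι → g) (hf0 : ∀ i, π (f i) = 0)
    (hforth : ∀ i j, ipg (f i) (f j) = if i = j then 1 else 0)
    (hfspan : ∀ z : g, π z = 0 → z ∈ Submodule.span ℝ (Set.range f))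
    (b : Module.Basis κ ℝ g)
    (hb : ∀ i j, ipg (b i) (b j) = if i = j then 1 else 0)
    (c : Module.Basis κ' ℝ h)
    (hc : ∀ i j, iph1 (c i) (c j) = if i = j then 1 else 0)
    -- H is the mean curvature vector of ker π ⊂ 𝔤
    (H : g) (hHperp : ∀ z : g, π z = 0 → ipg H z = 0)
    (hH : ∀ v : g, (∀ z : g, π z = 0 → ipg v z = 0) →
      ipg H v = ∑ i, ipg ⁅v, f i⁆ (f i))
    -- H^ρ ∈ 𝔥 is defined by ⟨H^ρ, h'⟩₁ = tr(ρ(h'))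
    (Hρ : h) (hHρ : ∀ u : g, (∀ z : g, π z = 0 → ipg u z = 0) →
      iph1 Hρ (π u) = ∑ i, ipg ⁅u, f i⁆ (f i))
    -- τId is the tension of Id : (𝔥,iph1) → (𝔥,iph2)
    (τId : h) (hτId : τId = ∑ j, (B (c j) (c j) - A1 (c j) (c j)))
    (Ug : g) (hUg : ∀ v : g, ipg Ug v = LinearMap.trace ℝ g (LieAlgebra.ad ℝ g v)) :
    (∀ u : g, (∀ z : g, π z = 0 → ipg u z = 0) →
      iph1 (π H) (π u) = ∑ i, ipg ⁅u, f i⁆ (f i)) ∧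
    ((∑ k, B (π (b k)) (π (b k))) - π Ug = τId - Hρ) ∧
    ((∀ u : g, (∀ z : g, π z = 0 → ipg u z = 0) → (∑ i, ipg ⁅u, f i⁆ (f i)) = 0) →
      iph1 = iph2 → (∑ k, B (π (b k)) (π (b k))) - π Ug = 0) := by
  classical
  have hπ' : ∀ x : g, π.toLinearMap x = π x := fun _ => rfl
  have hπsub : ∀ x y : g, π (x - y) = π x - π y := by
    intro x y
    rw [← hπ', ← hπ' x, ← hπ' y, map_sub]
  -- vertical projection onto span of f
  set P : g → g := fun x => ∑ i, ipg x (f i) • f i with hPdef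
  have hPker : ∀ x, π (P x) = 0 := by
    intro x
    rw [hPdef]
    simp only [← hπ', map_sum, map_smul]
    simp [hπ', hf0]
  have hPhoriz : ∀ x z, π z = 0 → ipg (x - P x) z = 0 := by
    intro x z hz
    have hle : Submodule.span ℝ (Set.range f) ≤ LinearMap.ker (ipg (x - P x)) := by
      rw [Submodule.span_le]
      rintro _ ⟨j, rfl⟩
      have h1 : ipg (x - P x) (f j) = ipg x (f j) - ∑ i, ipg x (f i) * ipg (f i) (f j) := by
        simp [hPdef, map_sub, map_sum, map_smul, smul_eq_mul]
      have h2 : (∑ i, ipg x (f i) * ipg (f i) (f j)) = ipg x (f j) := by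
        rw [Finset.sum_eq_single j]
        · rw [hforth]; simp
        · intro i _ hi; rw [hforth]; simp [hi]
        · intro hj; simp at hj
      simp only [SetLike.mem_coe, LinearMap.mem_ker]
      rw [h1, h2, sub_self]
    exact hle (hfspan z hz)
  -- horizontal lifts of the basis c
  have hte : ∀ j : κ', ∃ ej : g, π ej = c j ∧ (∀ z, π z = 0 → ipg ej z = 0) := by
    intro j
    obtain ⟨u, hu⟩ := hsurj (c j)
    refine ⟨u - P u, ?_, fun z hz => hPhoriz u z hz⟩
    rw [hπsub, hPker, sub_zero, hu]
  choose e hπe he_h using hte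
  have heorth : ∀ i j, ipg (e i) (e j) = if i = j then 1 else 0 := by
    intro i j
    rw [← hiso (e i) (e j) (he_h i) (he_h j), hπe, hπe, hc]
  have hcspan : ∀ w : h, w ∈ Submodule.span ℝ (Set.range c) := by
    intro w; rw [c.span_eq]; exact Submodule.mem_top
  have hbspan : ∀ x : g, x ∈ Submodule.span ℝ (Set.range b) := by
    intro x; rw [b.span_eq]; exact Submodule.mem_top
  -- every horizontal vector is a combination of the e j
  have hhoriz_eq : ∀ v : g, (∀ z, π z = 0 → ipg v z = 0) →
      v = ∑ j, iph1 (π v) (c j) • e j := by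
    intro v hv
    set y := ∑ j, iph1 (π v) (c j) • e j with hy
    have hπy : π y = π v := by
      have hx := stmt18_aux_expand iph1 h1pos (⇑c) hc hcspan (π v)
      rw [hy]
      simp only [← hπ', map_sum, map_smul]
      simp only [hπ', hπe]
      exact hx.symm
    have hyh : ∀ z, π z = 0 → ipg y z = 0 := by
      intro z hz
      rw [hy]
      simp only [map_sum, LinearMap.sum_apply, map_smul, LinearMap.smul_apply, smul_eq_mul]
      refine Finset.sum_eq_zero fun j _ => ?_
      rw [he_h j z hz, mul_zero]
    have hπd : π (v - y) = 0 := by rw [hπsub, hπy, sub_self]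
    have hdz : ipg (v - y) (v - y) = 0 := by
      rw [show ipg (v - y) = ipg v - ipg y from map_sub ipg v y, LinearMap.sub_apply,
        hv _ hπd, hyh _ hπd, sub_zero]
    have hd0 : v - y = 0 := by
      by_contra hne
      have := hgpos _ hne
      rw [hdz] at this
      exact lt_irrefl 0 this
    exact (sub_eq_zero.mp hd0)
  -- the combined orthonormal spanning family
  set F : ι ⊕ κ' → g := Sum.elim f e with hFdef
  have hForth : ∀ i j, ipg (F i) (F j) = if i = j then 1 else 0 := by
    rintro (i | i) (j | j)
    · show ipg (f i) (f j) = _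
      rw [hforth]
      by_cases hij : i = j <;> simp [hij]
    · show ipg (f i) (e j) = _
      rw [hgsymm, he_h j _ (hf0 i)]
      simp
    · show ipg (e i) (f j) = _
      rw [he_h i _ (hf0 j)]
      simp
    · show ipg (e i) (e j) = _
      rw [heorth]
      by_cases hij : i = j <;> simp [hij]
  have hFspan : ∀ x : g, x ∈ Submodule.span ℝ (Set.range F) := by
    intro x
    have h1 : P x ∈ Submodule.span ℝ (Set.range F) := by
      refine Submodule.sum_mem _ fun i _ => ?_
      exact Submodule.smul_mem _ _ (Submodule.subset_span ⟨Sum.inl i, rfl⟩)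
    have h2 : x - P x ∈ Submodule.span ℝ (Set.range F) := by
      rw [hhoriz_eq (x - P x) (hPhoriz x)]
      refine Submodule.sum_mem _ fun j _ => ?_
      exact Submodule.smul_mem _ _ (Submodule.subset_span ⟨Sum.inr j, rfl⟩)
    have h3 := Submodule.add_mem _ h1 h2
    simpa using h3
  -- part 1
  have part1 : ∀ u : g, (∀ z : g, π z = 0 → ipg u z = 0) →
      iph1 (π H) (π u) = ∑ i, ipg ⁅u, f i⁆ (f i) := by
    intro u hu
    rw [hiso H u hHperp hu, hH u hu]
  -- the B-sum over b equals the B-sum over c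
  have key1 : (∑ k, B (π (b k)) (π (b k))) = ∑ j, B (c j) (c j) := by
    have hinv := stmt18_aux_invariant ipg hgsymm hgpos (⇑b) F hb hbspan hForth hFspan
      (B.compl₁₂ π.toLinearMap π.toLinearMap)
    simp only [LinearMap.compl₁₂_apply, LieHom.coe_toLinearMap] at hinv
    rw [hinv, Fintype.sum_sum_type]
    simp only [hFdef, Sum.elim_inl, Sum.elim_inr, hf0, hπe, map_zero, LinearMap.zero_apply]
    rw [Finset.sum_const_zero, zero_add]
  -- trace formula split along the family F
  have htr : ∀ v : g, LinearMap.trace ℝ g (LieAlgebra.ad ℝ g v)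
      = (∑ i, ipg ⁅v, f i⁆ (f i)) + ∑ j, ipg ⁅v, e j⁆ (e j) := by
    intro v
    rw [stmt18_aux_trace ipg b hb]
    have hinv := stmt18_aux_invariant ipg hgsymm hgpos (⇑b) F hb hbspan hForth hFspan
      (ipg ∘ₗ LieAlgebra.ad ℝ g v)
    simp only [LinearMap.comp_apply, LieAlgebra.ad_apply] at hinv ⊢
    rw [hinv, Fintype.sum_sum_type]
    simp only [hFdef, Sum.elim_inl, Sum.elim_inr]
  -- π Ug = ∑ A1 (c j) (c j) + Hρ
  have hπUg : π Ug = (∑ j, A1 (c j) (c j)) + Hρ := by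
    have hA1diag : ∀ j m, iph1 (A1 (c j) (c j)) (c m) = iph1 ⁅c m, c j⁆ (c j) := by
      intro j m
      have h1 := hA1 (c j) (c j) (c m)
      rw [lie_self, map_zero, LinearMap.zero_apply] at h1
      linarith
    have hUgcm : ∀ m, iph1 (π Ug) (c m)
        = (∑ j, iph1 (A1 (c j) (c j)) (c m)) + iph1 Hρ (c m) := by
      intro m
      have h2 : π (Ug - P Ug) = π Ug := by rw [hπsub, hPker, sub_zero]
      have h1 : iph1 (π Ug) (c m) = ipg (Ug - P Ug) (e m) := by
        have := hiso (Ug - P Ug) (e m) (hPhoriz Ug) (he_h m)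
        rw [h2, hπe] at this
        exact this
      have h3 : ipg (P Ug) (e m) = 0 := by
        simp only [hPdef, map_sum, LinearMap.sum_apply, map_smul, LinearMap.smul_apply,
          smul_eq_mul]
        refine Finset.sum_eq_zero fun i _ => ?_
        rw [hgsymm (f i) (e m), he_h m _ (hf0 i), mul_zero]
      have h4 : ipg (Ug - P Ug) (e m) = ipg Ug (e m) := by
        rw [map_sub, LinearMap.sub_apply, h3, sub_zero]
      have h5 : ipg Ug (e m)
          = (∑ i, ipg ⁅e m, f i⁆ (f i)) + ∑ j, ipg ⁅e m, e j⁆ (e j) := by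
        rw [hUg, htr]
      have h6 : (∑ i, ipg ⁅e m, f i⁆ (f i)) = iph1 Hρ (c m) := by
        have := hHρ (e m) (he_h m)
        rw [hπe] at this
        exact this.symm
      have h7 : ∀ j, ipg ⁅e m, e j⁆ (e j) = iph1 ⁅c m, c j⁆ (c j) := by
        intro j
        have hbr := hω (e m) (e j) (he_h m) (he_h j)
        have := hiso ⁅e m, e j⁆ (e j) hbr (he_h j)
        rw [LieHom.map_lie, hπe, hπe] at this
        exact this.symm
      rw [h1, h4, h5, h6]
      have h8 : (∑ j, ipg ⁅e m, e j⁆ (e j)) = ∑ j, iph1 (A1 (c j) (c j)) (c m) := by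
        refine Finset.sum_congr rfl fun j _ => ?_
        rw [h7 j, hA1diag j m]
      rw [h8]
      ring
    have hdc : ∀ m, iph1 (π Ug - ((∑ j, A1 (c j) (c j)) + Hρ)) (c m) = 0 := by
      intro m
      have hexpand : iph1 (π Ug - ((∑ j, A1 (c j) (c j)) + Hρ)) (c m)
          = iph1 (π Ug) (c m) - ((∑ j, iph1 (A1 (c j) (c j)) (c m)) + iph1 Hρ (c m)) := by
        simp [map_sub, map_add, map_sum, LinearMap.sub_apply, LinearMap.add_apply,
          LinearMap.sum_apply]
      rw [hexpand, hUgcm m]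
      ring
    have hexp := stmt18_aux_expand iph1 h1pos (⇑c) hc hcspan
      (π Ug - ((∑ j, A1 (c j) (c j)) + Hρ))
    have hz : π Ug - ((∑ j, A1 (c j) (c j)) + Hρ) = 0 := by
      rw [hexp]
      refine Finset.sum_eq_zero fun k _ => ?_
      rw [hdc k, zero_smul]
    exact sub_eq_zero.mp hz
  -- part 2
  have part2 : (∑ k, B (π (b k)) (π (b k))) - π Ug = τId - Hρ := by
    rw [key1, hπUg, hτId, Finset.sum_sub_distrib]
    abel
  refine ⟨part1, part2, ?_⟩
  -- part 3
  intro h0 heq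
  rw [part2]
  have hHρ0 : Hρ = 0 := by
    have hcm : ∀ m, iph1 Hρ (c m) = 0 := by
      intro m
      have hm := hHρ (e m) (he_h m)
      rw [hπe] at hm
      rw [hm]
      exact h0 (e m) (he_h m)
    have hexp := stmt18_aux_expand iph1 h1pos (⇑c) hc hcspan Hρ
    rw [hexp]
    refine Finset.sum_eq_zero fun k _ => ?_
    rw [hcm k, zero_smul]
  have hBA1 : ∀ j, B (c j) (c j) = A1 (c j) (c j) := by
    intro j
    have hw : ∀ w, iph1 (B (c j) (c j) - A1 (c j) (c j)) w = 0 := by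
      intro w
      have h1 := hA1 (c j) (c j) w
      have h2 := hB (c j) (c j) w
      rw [← heq] at h2
      simp only [map_sub, LinearMap.sub_apply]
      linarith
    have hexp := stmt18_aux_expand iph1 h1pos (⇑c) hc hcspan
      (B (c j) (c j) - A1 (c j) (c j))
    have hz : B (c j) (c j) - A1 (c j) (c j) = 0 := by
      rw [hexp]
      refine Finset.sum_eq_zero fun k _ => ?_
      rw [hw (c k), zero_smul]
    exact sub_eq_zero.mp hz
  have hτ0 : τId = 0 := by
    rw [hτId]
    refine Finset.sum_eq_zero fun j _ => ?_
    rw [hBA1 j, sub_self]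
  rw [hτ0, hHρ0, sub_zero]
end
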